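/- Let B be a width-3 ROBP whose first and last layers each have at most 2 vertices, which has at least one colliding layer, and which has no redundant vertices (every vertex is reachable from one of the two start vertices, and no two vertices in the same layer are locally equivalent). Let v_{1,1} and v_{1,2} be the two start vertices. Then there exists an input string on which the two computation paths starting from v_{1,1} and v_{1,2} collide, i.e., reach a common vertex at some layer. -/
import Mathlib


open Finset

/-- Uniform-distribution expectation of `f` over a finite type. -/
noncomputable def uexp {α : Type*} [Fintype α] (f : α → ℝ) : ℝ :=
  (∑ x : α, f x) / (Fintype.card α : ℝ)

/-- Variance under the uniform distribution. -/
noncomputable def uvar {α : Type*} [Fintype α] (f : α → ℝ) : ℝ :=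
  uexp (fun x => f x ^ 2) - (uexp f) ^ 2

open Classical in
/-- Real-valued indicator of a proposition. -/
noncomputable def ind (P : Prop) : ℝ := if P then 1 else 0

/-- `sel T x y` agrees with `x` on `T` and with `y` outside of `T`. -/
def sel {n : ℕ} (T : Finset (Fin n)) (x y : Fin n → Bool) : Fin n → Bool :=
  fun i => if i ∈ T then x i else y i

/-- The bias function of `f` with respect to the set `T` of live coordinates. -/
noncomputable def biasFn {n : ℕ} (T : Finset (Fin n)) (f : (Fin n → Bool) → ℝ) :
    (Fin n → Bool) → ℝ :=
  fun x => uexp (fun y : Fin n → Bool => f (sel T x y))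

/-- A layered read-once branching program of width `w` and length `n`.
`V i` is the set of vertices of layer `i`; the Boolean `true` corresponds to the
edge label `1` and `false` to the edge label `-1`; the program outputs `-1` iff it
accepts. -/
structure ROBP (w n : ℕ) where
  V : Fin (n + 1) → Finset (Fin w)
  V_nonempty : ∀ i, (V i).Nonempty
  start : Fin w
  start_mem : start ∈ V 0
  trans : Fin n → Bool → Fin w → Fin w
  trans_mem : ∀ (i : Fin n) (b : Bool) (v : Fin w), v ∈ V i.castSucc → trans i b v ∈ V i.succ
  accept : Fin w → Bool

namespace ROBP

variable {w n : ℕ}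

/-- The state reached at layer `j` when starting from state `v` at layer `i`. -/
def runTo (B : ROBP w n) (x : Fin n → Bool) (v : Fin w) (i j : ℕ) : Fin w :=
  if h : i < j ∧ i < n then runTo B x (B.trans ⟨i, h.2⟩ (x ⟨i, h.2⟩) v) (i + 1) j else v
termination_by j - i
decreasing_by omega

/-- The final state on input `x`, starting from the start vertex. -/
def run (B : ROBP w n) (x : Fin n → Bool) : Fin w := B.runTo x B.start 0 n

/-- The `±1` value computed by `B` on `x` (`-1` means accept). -/
noncomputable def eval (B : ROBP w n) (x : Fin n → Bool) : ℝ :=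
  if B.accept (B.run x) then -1 else 1

/-- Probability (over a uniformly random input) of reaching vertex `v` at layer `j`. -/
noncomputable def reachProb (B : ROBP w n) (j : ℕ) (v : Fin w) : ℝ :=
  uexp (fun x : Fin n → Bool => if B.runTo x B.start 0 j = v then (1 : ℝ) else 0)

/-- Acceptance probability starting from vertex `v` at layer `i`, on a uniform input. -/
noncomputable def beta (B : ROBP w n) (i : ℕ) (v : Fin w) : ℝ :=
  uexp (fun x : Fin n → Bool => if B.accept (B.runTo x v i n) then (1 : ℝ) else 0)

/-- Layer `i` of edges is colliding: two distinct vertices of layer `i` have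
equally-labeled edges entering the same vertex of layer `i+1`. -/
def Colliding (B : ROBP w n) (i : Fin n) : Prop :=
  ∃ (b : Bool) (u v : Fin w), u ∈ B.V i.castSucc ∧ v ∈ B.V i.castSucc ∧ u ≠ v ∧
    B.trans i b u = B.trans i b v

/-- The number of colliding layers of `B`. -/
noncomputable def collidingCount (B : ROBP w n) : ℕ :=
  Nat.card {i : Fin n // B.Colliding i}

/-- The value of `B` on `x` when all vertices of `V 0` are interpreted as start
vertices: the average of the `±1` outcomes of the corresponding computation paths. -/
noncomputable def avgEval (B : ROBP w n) (x : Fin n → Bool) : ℝ :=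
  (∑ v ∈ B.V 0, (if B.accept (B.runTo x v 0 n) then (-1 : ℝ) else 1)) / ((B.V 0).card : ℝ)

/-- The averaged value of the suffix of `B` starting at layer `t`, whose start-vertex
set is `V t`. -/
noncomputable def suffixEval (B : ROBP w n) (t : Fin (n + 1)) (x : Fin n → Bool) : ℝ :=
  (∑ v ∈ B.V t, (if B.accept (B.runTo x v (t : ℕ) n) then (-1 : ℝ) else 1)) /
    ((B.V t).card : ℝ)

/-- `B` is a `(w, ℓ, m)`-ROBP: it can be written as a concatenation of `m` consecutive
blocks, each block boundary layer having at most `2` vertices and each block having at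
most `ℓ` colliding layers. -/
def IsDecomp (B : ROBP w n) (ℓ m : ℕ) : Prop :=
  ∃ cut : Fin (m + 1) → Fin (n + 1),
    Monotone cut ∧ cut 0 = 0 ∧ cut (Fin.last m) = Fin.last n ∧
    (∀ j, (B.V (cut j)).card ≤ 2) ∧
    (∀ j : Fin m,
      Nat.card {i : Fin n //
        (cut j.castSucc : ℕ) ≤ (i : ℕ) ∧ (i : ℕ) < (cut j.succ : ℕ) ∧ B.Colliding i} ≤ ℓ)

end ROBP

/-- `G` is a pseudorandom generator that `ε`-fools the real-valued function `f`. -/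
def fools {r n : ℕ} (G : (Fin r → Bool) → (Fin n → Bool)) (f : (Fin n → Bool) → ℝ)
    (ε : ℝ) : Prop :=
  |uexp f - uexp (fun s => f (G s))| ≤ ε

/-- Expectation of `f` under the distribution with mass function `μ`. -/
noncomputable def dExp {α : Type*} [Fintype α] (μ f : α → ℝ) : ℝ :=
  ∑ x : α, μ x * f x

namespace ROBP

variable {w n : ℕ}

theorem runTo_def' (B : ROBP w n) (x : Fin n → Bool) (v : Fin w) (i j : ℕ) :
    B.runTo x v i j =
      if h : i < j ∧ i < n then B.runTo x (B.trans ⟨i, h.2⟩ (x ⟨i, h.2⟩) v) (i + 1) j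
      else v := by
  rw [runTo]

theorem runTo_of_lt (B : ROBP w n) (x : Fin n → Bool) (v : Fin w) {i j : ℕ}
    (h1 : i < j) (h2 : i < n) :
    B.runTo x v i j = B.runTo x (B.trans ⟨i, h2⟩ (x ⟨i, h2⟩) v) (i + 1) j := by
  rw [runTo_def', dif_pos ⟨h1, h2⟩]

theorem runTo_stop (B : ROBP w n) (x : Fin n → Bool) (v : Fin w) {i j : ℕ}
    (h : ¬ (i < j ∧ i < n)) : B.runTo x v i j = v := by
  rw [runTo_def', dif_neg h]

theorem runTo_comp (B : ROBP w n) (x : Fin n → Bool) (v : Fin w) (i j k : ℕ)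
    (hij : i ≤ j) (hjk : j ≤ k) :
    B.runTo x (B.runTo x v i j) j k = B.runTo x v i k := by
  by_cases h : i < j ∧ i < n
  · rw [B.runTo_of_lt x v h.1 h.2, B.runTo_of_lt x v (by omega) h.2]
    exact B.runTo_comp x _ (i + 1) j k (by omega) hjk
  · rw [B.runTo_stop x v h]
    by_cases h' : i < j
    · have hn : ¬ i < n := by tauto
      rw [B.runTo_stop x v (by omega), B.runTo_stop x v (by omega)]
    · rw [show j = i by omega]
termination_by j - i
decreasing_by omega

theorem runTo_congr (B : ROBP w n) (x y : Fin n → Bool) (v : Fin w) (i j : ℕ)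
    (hxy : ∀ k : Fin n, i ≤ (k : ℕ) → (k : ℕ) < j → x k = y k) :
    B.runTo x v i j = B.runTo y v i j := by
  by_cases h : i < j ∧ i < n
  · rw [B.runTo_of_lt x v h.1 h.2, B.runTo_of_lt y v h.1 h.2,
      hxy ⟨i, h.2⟩ (le_refl i) h.1]
    exact B.runTo_congr x y _ (i + 1) j (fun k h1 h2 => hxy k (by omega) h2)
  · rw [B.runTo_stop x v h, B.runTo_stop y v h]
termination_by j - i
decreasing_by omega

theorem runTo_mem (B : ROBP w n) (x : Fin n → Bool) (i j : ℕ) (hij : i ≤ j) (hj : j ≤ n)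
    (v : Fin w) (hv : v ∈ B.V ⟨i, by omega⟩) :
    B.runTo x v i j ∈ B.V ⟨j, by omega⟩ := by
  by_cases h : i < j
  · have hin : i < n := by omega
    rw [B.runTo_of_lt x v h hin]
    have h1 := B.trans_mem ⟨i, hin⟩ (x ⟨i, hin⟩) v (by simpa [Fin.castSucc_mk] using hv)
    have h2 : B.trans ⟨i, hin⟩ (x ⟨i, hin⟩) v ∈ B.V ⟨i + 1, by omega⟩ := by
      simpa [Fin.succ_mk] using h1
    exact B.runTo_mem x (i + 1) j (by omega) hj _ h2
  · rw [B.runTo_stop x v (by omega)]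
    have hji : j = i := by omega
    subst hji
    exact hv
termination_by j - i
decreasing_by omega

theorem runTo_succ (B : ROBP w n) (x : Fin n → Bool) (v : Fin w) {t : ℕ} (ht : t < n) :
    B.runTo x v 0 (t + 1) = B.trans ⟨t, ht⟩ (x ⟨t, ht⟩) (B.runTo x v 0 t) := by
  rw [← B.runTo_comp x v 0 t (t + 1) (by omega) (by omega),
    B.runTo_of_lt x _ (by omega) ht, B.runTo_stop x _ (by omega)]

theorem runTo_update (B : ROBP w n) (x : Fin n → Bool) (v : Fin w) {t : ℕ} (ht : t < n)
    (c : Bool) :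
    B.runTo (Function.update x ⟨t, ht⟩ c) v 0 (t + 1)
      = B.trans ⟨t, ht⟩ c (B.runTo x v 0 t) := by
  rw [B.runTo_succ _ v ht, Function.update_self]
  congr 1
  exact B.runTo_congr _ x v 0 t (fun k h1 h2 => by
    apply Function.update_of_ne
    intro hk
    rw [hk] at h2
    simp at h2)

end ROBP
/-- A reachable (unordered) pair of states at layer `t`, for paths from `v1`, `v2`. -/
def RPair {n : ℕ} (B : ROBP 3 n) (v1 v2 : Fin 3) (t : ℕ) (a z : Fin 3) : Prop :=
  ∃ x : Fin n → Bool,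
    (B.runTo x v1 0 t = a ∧ B.runTo x v2 0 t = z) ∨
    (B.runTo x v1 0 t = z ∧ B.runTo x v2 0 t = a)

theorem RPair.symm {n : ℕ} {B : ROBP 3 n} {v1 v2 : Fin 3} {t : ℕ} {a z : Fin 3}
    (h : RPair B v1 v2 t a z) : RPair B v1 v2 t z a := by
  obtain ⟨x, h⟩ := h; exact ⟨x, h.symm⟩

theorem RPair.ne {n : ℕ} {B : ROBP 3 n} {v1 v2 : Fin 3} {t : ℕ} {a z : Fin 3}
    (hcon : ∀ (x : Fin n → Bool) (s : ℕ), s ≤ n → B.runTo x v1 0 s ≠ B.runTo x v2 0 s)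
    (ht : t ≤ n) (h : RPair B v1 v2 t a z) : a ≠ z := by
  obtain ⟨x, h | h⟩ := h
  · rw [← h.1, ← h.2]; exact hcon x t ht
  · rw [← h.1, ← h.2]; exact (hcon x t ht).symm

theorem RPair.mem_left {n : ℕ} {B : ROBP 3 n} {v1 v2 : Fin 3} {t : ℕ} {a z : Fin 3}
    (hv1 : v1 ∈ B.V 0) (hv2 : v2 ∈ B.V 0) (ht : t ≤ n) (h : RPair B v1 v2 t a z) :
    a ∈ B.V ⟨t, by omega⟩ := by
  obtain ⟨x, h | h⟩ := h
  · rw [← h.1]; exact B.runTo_mem x 0 t (by omega) ht v1 hv1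
  · rw [← h.2]; exact B.runTo_mem x 0 t (by omega) ht v2 hv2

theorem RPair.step {n : ℕ} {B : ROBP 3 n} {v1 v2 : Fin 3} {t : ℕ} {a z : Fin 3}
    (h : RPair B v1 v2 t a z) (ht : t < n) (c : Bool) :
    RPair B v1 v2 (t + 1) (B.trans ⟨t, ht⟩ c a) (B.trans ⟨t, ht⟩ c z) := by
  obtain ⟨x, h | h⟩ := h
  · exact ⟨Function.update x ⟨t, ht⟩ c, Or.inl ⟨by rw [B.runTo_update x v1 ht c, h.1],
      by rw [B.runTo_update x v2 ht c, h.2]⟩⟩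
  · exact ⟨Function.update x ⟨t, ht⟩ c, Or.inr ⟨by rw [B.runTo_update x v1 ht c, h.1],
      by rw [B.runTo_update x v2 ht c, h.2]⟩⟩

theorem rp_no_collide {n : ℕ} {B : ROBP 3 n} {v1 v2 : Fin 3}
    (hcon : ∀ (x : Fin n → Bool) (s : ℕ), s ≤ n → B.runTo x v1 0 s ≠ B.runTo x v2 0 s)
    {i : Fin n} {b : Bool} {u v : Fin 3} (htr : B.trans i b u = B.trans i b v)
    (h : RPair B v1 v2 (i : ℕ) u v) : False := by
  have hi := i.isLt
  have h' := h.step i.isLt b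
  exact RPair.ne hcon (by omega) h' htr
/-- A width-3 ROBP with at most `2` vertices on its first and last
layers, at least one colliding layer and no redundant vertices (every vertex is
reachable from one of the two start vertices, and no two distinct vertices of a layer
are locally equivalent) admits an input on which the two computation paths starting
from the two start vertices collide. -/
theorem collision_exists
    (n : ℕ) (B : ROBP 3 n) (v1 v2 : Fin 3) (hne : v1 ≠ v2)
    (hV0 : B.V 0 = {v1, v2})
    (hVlast : (B.V (Fin.last n)).card ≤ 2)
    (hcol : ∃ i : Fin n, B.Colliding i)
    (hreach : ∀ i : Fin (n + 1), ∀ v ∈ B.V i,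
      ∃ (x : Fin n → Bool) (u : Fin 3), u ∈ B.V 0 ∧ B.runTo x u 0 (i : ℕ) = v)
    (hnoneq : ∀ i : Fin n, ∀ u ∈ B.V i.castSucc, ∀ v ∈ B.V i.castSucc, u ≠ v →
      ¬ (B.trans i true u = B.trans i true v ∧ B.trans i false u = B.trans i false v)) :
    ∃ (x : Fin n → Bool) (t : ℕ), t ≤ n ∧ B.runTo x v1 0 t = B.runTo x v2 0 t := by
  by_contra hcontra
  push_neg at hcontra
  have hv1 : v1 ∈ B.V 0 := by rw [hV0]; exact Finset.mem_insert_self _ _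
  have hv2 : v2 ∈ B.V 0 := by
    rw [hV0]; exact Finset.mem_insert_of_mem (Finset.mem_singleton_self _)
  have fin3 : ∀ u v q1 q2 : Fin 3,
      u ≠ v → q1 ≠ u → q1 ≠ v → q2 ≠ u → q2 ≠ v → q1 = q2 := by decide
  obtain ⟨i, b, u, v, hu, hv, huv, htr⟩ := hcol
  have getpair : ∀ w : Fin 3, w ∈ B.V i.castSucc →
      ∃ q, RPair B v1 v2 (i : ℕ) w q := by
    intro w hw
    obtain ⟨x, u0, hu0, hxw⟩ := hreach i.castSucc w hw
    rw [hV0, Finset.mem_insert, Finset.mem_singleton] at hu0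
    rw [Fin.coe_castSucc] at hxw
    rcases hu0 with rfl | rfl
    · exact ⟨B.runTo x v2 0 (i : ℕ), x, Or.inl ⟨hxw, rfl⟩⟩
    · exact ⟨B.runTo x v1 0 (i : ℕ), x, Or.inr ⟨rfl, hxw⟩⟩
  obtain ⟨qu, hqu⟩ := getpair u hu
  obtain ⟨qv, hqv⟩ := getpair v hv
  have hqu_u : qu ≠ u := (RPair.ne hcontra (le_of_lt i.isLt) hqu).symm
  have hqu_v : qu ≠ v := fun h => rp_no_collide hcontra htr (h ▸ hqu)
  have hqv_v : qv ≠ v := (RPair.ne hcontra (le_of_lt i.isLt) hqv).symm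
  have hqv_u : qv ≠ u := fun h => rp_no_collide hcontra htr (RPair.symm (h ▸ hqv))
  have hzz : qu = qv := fin3 u v qu qv huv hqu_u hqu_v hqv_u hqv_v
  have hqv' : RPair B v1 v2 (i : ℕ) v qu := hzz ▸ hqv
  have key : ∀ t : ℕ, (i : ℕ) ≤ t → t ≤ n →
      ∃ a b z : Fin 3, a ≠ b ∧ RPair B v1 v2 t a z ∧ RPair B v1 v2 t b z := by
    intro t hit
    induction t, hit using Nat.le_induction with
    | base => exact fun _ => ⟨u, v, qu, huv, hqu, hqv'⟩
    | succ t hit ih =>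
      intro h
      have ht : t < n := by omega
      obtain ⟨a, b', z, hab, h1, h2⟩ := ih (by omega)
      have ha := RPair.mem_left hv1 hv2 (by omega) h1
      have hb := RPair.mem_left hv1 hv2 (by omega) h2
      have hc : ∃ c : Bool, B.trans ⟨t, ht⟩ c a ≠ B.trans ⟨t, ht⟩ c b' := by
        by_contra hno
        push_neg at hno
        exact hnoneq ⟨t, ht⟩ a (by rw [Fin.castSucc_mk]; exact ha)
          b' (by rw [Fin.castSucc_mk]; exact hb) hab ⟨hno true, hno false⟩
      obtain ⟨c, hc⟩ := hc
      exact ⟨_, _, _, hc, h1.step ht c, h2.step ht c⟩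
  obtain ⟨a, b', z, hab, h1, h2⟩ := key n (le_of_lt i.isLt) le_rfl
  have haz := RPair.ne hcontra le_rfl h1
  have hbz := RPair.ne hcontra le_rfl h2
  have ha := RPair.mem_left hv1 hv2 le_rfl h1
  have hb := RPair.mem_left hv1 hv2 le_rfl h2
  have hz := RPair.mem_left hv1 hv2 le_rfl h1.symm
  have hsub : ({a, b', z} : Finset (Fin 3)) ⊆ B.V (Fin.last n) := by
    intro y hy
    simp only [Finset.mem_insert, Finset.mem_singleton] at hy
    rcases hy with rfl | rfl | rfl
    · exact ha
    · exact hb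
    · exact hz
  have hcard : ({a, b', z} : Finset (Fin 3)).card = 3 := by
    rw [Finset.card_insert_of_notMem (by simp [hab, haz]),
      Finset.card_insert_of_notMem (by simp [hbz]), Finset.card_singleton]
  have hle := Finset.card_le_card hsub
  omega
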